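/- For d ≥ 2, the Shapley-kernel Gram matrix satisfies U^T W U = ((d−1)/d)·I + B·J, where B = ((d−1)/d)·(Σ_{k=1}^{d−1} 1/(d−k)) − (d−1)/d, I is the d×d identity, and J is the d×d all-ones matrix. -/

import Mathlib

open Finset Matrix

/-- The Shapley kernel weight. -/
noncomputable def shapKernel (d : ℕ) (S : Finset (Fin d)) : ℝ :=
  ((d : ℝ) - 1) / ((d.choose S.card : ℝ) * (S.card : ℝ) * ((d : ℝ) - (S.card : ℝ)))

/-- The indicator matrix `U`, with one row for each nonempty proper subset of `N`. -/
def indMat (d : ℕ) :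
    Matrix {S : Finset (Fin d) // S.Nonempty ∧ S ≠ Finset.univ} (Fin d) ℝ :=
  fun S i => if i ∈ S.1 then 1 else 0

/-- The diagonal Shapley-kernel weight matrix `W`. -/
noncomputable def wMat (d : ℕ) :
    Matrix {S : Finset (Fin d) // S.Nonempty ∧ S ≠ Finset.univ}
      {S : Finset (Fin d) // S.Nonempty ∧ S ≠ Finset.univ} ℝ :=
  Matrix.diagonal (fun S => shapKernel d S.1)

noncomputable def wfun (d s : ℕ) : ℝ :=
  ((d : ℝ) - 1) / ((d.choose s : ℝ) * (s : ℝ) * ((d : ℝ) - (s : ℝ)))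

lemma count_superset {α : Type*} [DecidableEq α] [Fintype α] (T : Finset α) (s : ℕ)
    (hts : T.card ≤ s) :
    (((Finset.univ : Finset α).powersetCard s).filter (fun S => T ⊆ S)).card
      = (Fintype.card α - T.card).choose (s - T.card) := by
  have h1 : ((Finset.univ : Finset α) \ T).card = Fintype.card α - T.card := by
    simp [Finset.card_sdiff_of_subset (Finset.subset_univ T)]
  rw [← h1, ← Finset.card_powersetCard (s - T.card) (Finset.univ \ T)]
  apply Finset.card_nbij' (fun S => S \ T) (fun S => S ∪ T)
  · intro S hS
    simp only [Finset.mem_coe, Finset.mem_filter, Finset.mem_powersetCard] at hS ⊢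
    obtain ⟨⟨_, hcard⟩, hTS⟩ := hS
    constructor
    · exact Finset.sdiff_subset_sdiff (Finset.subset_univ S) le_rfl
    · rw [Finset.card_sdiff_of_subset hTS, hcard]
  · intro S hS
    simp only [Finset.mem_coe, Finset.mem_filter, Finset.mem_powersetCard] at hS ⊢
    obtain ⟨hsub, hcard⟩ := hS
    have hdisj : Disjoint S T := by
      exact Finset.disjoint_left.2 fun x hx => by
        have := hsub hx; simp [Finset.mem_sdiff] at this; exact this
    refine ⟨⟨Finset.subset_univ _, ?_⟩, Finset.subset_union_right⟩
    rw [Finset.card_union_of_disjoint hdisj, hcard]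
    omega
  · intro S hS
    simp only [Finset.mem_coe, Finset.mem_filter, Finset.mem_powersetCard] at hS
    exact Finset.sdiff_union_of_subset hS.2
  · intro S hS
    simp only [Finset.mem_coe, Finset.mem_powersetCard] at hS
    have hdisj : Disjoint S T := by
      exact Finset.disjoint_left.2 fun x hx => by
        have := hS.1 hx; simp [Finset.mem_sdiff] at this; exact this
    exact Finset.union_sdiff_cancel_right hdisj

lemma sum_main (d : ℕ) (hd : 2 ≤ d) (T : Finset (Fin d)) (hT : T.Nonempty) :
    ∑ S ∈ Finset.univ.filter (fun S : Finset (Fin d) => S.Nonempty ∧ S ≠ Finset.univ),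
      (if T ⊆ S then shapKernel d S else 0)
      = ∑ s ∈ Finset.Icc T.card (d - 1),
          (((d - T.card).choose (s - T.card) : ℝ)) * wfun d s := by
  classical
  rw [Finset.sum_filter]
  rw [← Finset.powerset_univ, Finset.sum_powerset]
  have hcu : (Finset.univ : Finset (Fin d)).card = d := by simp
  rw [hcu]
  have key : ∀ j ∈ Finset.range (d + 1),
      (∑ S ∈ Finset.powersetCard j (Finset.univ : Finset (Fin d)),
        (if S.Nonempty ∧ S ≠ Finset.univ then (if T ⊆ S then shapKernel d S else 0) else 0))
      = if j ∈ Finset.Icc T.card (d - 1)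
          then (((d - T.card).choose (j - T.card) : ℝ)) * wfun d j else 0 := by
    intro j hj
    simp only [Finset.mem_range] at hj
    by_cases hjmem : j ∈ Finset.Icc T.card (d - 1)
    · simp only [hjmem, if_pos]
      simp only [Finset.mem_Icc] at hjmem
      have step : ∀ S ∈ Finset.powersetCard j (Finset.univ : Finset (Fin d)),
          (if S.Nonempty ∧ S ≠ Finset.univ then (if T ⊆ S then shapKernel d S else 0) else 0)
          = (if T ⊆ S then wfun d j else 0) := by
        intro S hS
        rw [Finset.mem_powersetCard] at hS
        by_cases hTS : T ⊆ S
        · have hne : S.Nonempty := hT.mono hTS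
          have hnuniv : S ≠ Finset.univ := by
            intro h
            have hSd : S.card = d := by rw [h, hcu]
            have hj2 : S.card = j := hS.2
            omega
          rw [if_pos ⟨hne, hnuniv⟩, if_pos hTS, if_pos hTS]
          unfold shapKernel wfun
          rw [hS.2]
        · rw [if_neg hTS]
          split <;> simp [hTS]
      rw [Finset.sum_congr rfl step, ← Finset.sum_filter, Finset.sum_const,
        count_superset T j hjmem.1]
      simp [Fintype.card_fin, mul_comm]
    · simp only [hjmem, if_neg, if_false]
      apply Finset.sum_eq_zero
      intro S hS
      rw [Finset.mem_powersetCard] at hS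
      simp only [Finset.mem_Icc, not_and_or, not_le] at hjmem
      rcases hjmem with h1 | h2
      · -- j < T.card : T ⊆ S impossible
        have : ¬ T ⊆ S := by
          intro hTS
          have := Finset.card_le_card hTS
          omega
        simp [this]
      · -- d - 1 < j ≤ d, so j = d and S = univ
        have hjd : j = d := by omega
        have : S = Finset.univ := by
          apply Finset.eq_univ_of_card
          rw [hS.2, hjd, Fintype.card_fin]
        simp [this]
  rw [Finset.sum_congr rfl key, Finset.sum_ite_mem]
  congr 1
  rw [Finset.inter_comm]
  apply Finset.inter_eq_left.2
  intro x hx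
  simp only [Finset.mem_Icc] at hx
  simp only [Finset.mem_range]
  omega

lemma nat_id1 (d s : ℕ) (hd : 1 ≤ d) (hs : 1 ≤ s) :
    d * (d - 1).choose (s - 1) = d.choose s * s := by
  have e1 : d - 1 + 1 = d := by omega
  have e2 : s - 1 + 1 = s := by omega
  have h := Nat.add_one_mul_choose_eq (d - 1) (s - 1)
  simp only [Nat.succ_eq_add_one, e1, e2] at h
  exact h

lemma nat_id2 (d s : ℕ) (hd : 2 ≤ d) (hs : 2 ≤ s) :
    d * (d - 1) * (d - 2).choose (s - 2) = d.choose s * (s * (s - 1)) := by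
  have h1 := nat_id1 d s (by omega) (by omega)
  have h2 := nat_id1 (d - 1) (s - 1) (by omega) (by omega)
  have e1 : d - 1 - 1 = d - 2 := by omega
  have e2 : s - 1 - 1 = s - 2 := by omega
  rw [e1, e2] at h2
  calc d * (d - 1) * (d - 2).choose (s - 2) = d * ((d - 1) * (d - 2).choose (s - 2)) := by ring
    _ = d * ((d - 1).choose (s - 1) * (s - 1)) := by rw [h2]
    _ = (d * (d - 1).choose (s - 1)) * (s - 1) := by ring
    _ = (d.choose s * s) * (s - 1) := by rw [h1]
    _ = d.choose s * (s * (s - 1)) := by ring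

lemma denoms (d s : ℕ) (hd : 2 ≤ d) (hs : 1 ≤ s) (hs2 : s ≤ d - 1) :
    (d.choose s : ℝ) ≠ 0 ∧ (s : ℝ) ≠ 0 ∧ ((d : ℝ) - s) ≠ 0 ∧ (d : ℝ) ≠ 0 ∧ ((d:ℝ) - 1) ≠ 0 := by
  have hsd : s < d := by omega
  refine ⟨?_, ?_, ?_, ?_, ?_⟩
  · exact Nat.cast_ne_zero.2 (Nat.choose_pos hsd.le).ne'
  · exact Nat.cast_ne_zero.2 (by omega)
  · have : (s : ℝ) < d := by exact_mod_cast hsd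
    linarith
  · exact Nat.cast_ne_zero.2 (by omega)
  · have : (2 : ℝ) ≤ d := by exact_mod_cast hd
    intro h; linarith

lemma term_diag (d s : ℕ) (hd : 2 ≤ d) (hs : 1 ≤ s) (hs2 : s ≤ d - 1) :
    ((d - 1).choose (s - 1) : ℝ) * wfun d s = ((d : ℝ) - 1) / (d * ((d : ℝ) - s)) := by
  obtain ⟨h1, h2, h3, h4, h5⟩ := denoms d s hd hs hs2
  have key : (d : ℝ) * ((d - 1).choose (s - 1) : ℝ) = (d.choose s : ℝ) * s := by
    exact_mod_cast nat_id1 d s (by omega) hs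
  unfold wfun
  field_simp
  linear_combination key

lemma term_off (d s : ℕ) (hd : 2 ≤ d) (hs : 2 ≤ s) (hs2 : s ≤ d - 1) :
    ((d - 2).choose (s - 2) : ℝ) * wfun d s = ((s : ℝ) - 1) / (d * ((d : ℝ) - s)) := by
  obtain ⟨h1, h2, h3, h4, h5⟩ := denoms d s hd (by omega) hs2
  have key : (d : ℝ) * ((d : ℝ) - 1) * ((d - 2).choose (s - 2) : ℝ)
      = (d.choose s : ℝ) * ((s : ℝ) * ((s : ℝ) - 1)) := by
    have := nat_id2 d s hd hs
    have hc : ((d * (d - 1) * (d - 2).choose (s - 2) : ℕ) : ℝ)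
        = ((d.choose s * (s * (s - 1)) : ℕ) : ℝ) := by exact_mod_cast this
    push_cast [Nat.cast_sub (by omega : 1 ≤ d), Nat.cast_sub (by omega : 1 ≤ s)] at hc
    linarith [hc]
  unfold wfun
  field_simp
  linear_combination key

lemma sum_diag (d : ℕ) (hd : 2 ≤ d) :
    ∑ s ∈ Finset.Icc 1 (d - 1), (((d - 1).choose (s - 1) : ℝ)) * wfun d s
      = ((d : ℝ) - 1) / d * ∑ k ∈ Finset.Icc 1 (d - 1), (1 : ℝ) / ((d : ℝ) - (k : ℝ)) := by
  rw [Finset.mul_sum]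
  apply Finset.sum_congr rfl
  intro s hs
  simp only [Finset.mem_Icc] at hs
  rw [term_diag d s hd hs.1 hs.2, div_mul_div_comm, mul_one]

lemma sum_off (d : ℕ) (hd : 2 ≤ d) :
    ∑ s ∈ Finset.Icc 2 (d - 1), (((d - 2).choose (s - 2) : ℝ)) * wfun d s
      = ((d : ℝ) - 1) / d * (∑ k ∈ Finset.Icc 1 (d - 1), (1 : ℝ) / ((d : ℝ) - (k : ℝ)))
          - ((d : ℝ) - 1) / d := by
  have hd0 : (d : ℝ) ≠ 0 := Nat.cast_ne_zero.2 (by omega)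
  have hd1 : ((d : ℝ) - 1) ≠ 0 := by
    have : (2 : ℝ) ≤ d := by exact_mod_cast hd
    intro h; linarith
  have step : ∀ s ∈ Finset.Icc 2 (d - 1),
      (((d - 2).choose (s - 2) : ℝ)) * wfun d s
        = ((d : ℝ) - 1) / d * (1 / ((d : ℝ) - s)) - 1 / d := by
    intro s hs
    simp only [Finset.mem_Icc] at hs
    rw [term_off d s hd hs.1 hs.2]
    have hds : ((d : ℝ) - s) ≠ 0 := by
      have h1 : s < d := by omega
      have : (s : ℝ) < d := by exact_mod_cast h1
      intro h; linarith
    field_simp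
    ring
  rw [Finset.sum_congr rfl step, Finset.sum_sub_distrib, ← Finset.mul_sum,
    Finset.sum_const, Nat.card_Icc]
  have hsplit : Finset.Icc 1 (d - 1) = insert 1 (Finset.Icc 2 (d - 1)) := by
    ext x
    simp only [Finset.mem_Icc, Finset.mem_insert]
    omega
  rw [hsplit, Finset.sum_insert (by simp), nsmul_eq_mul]
  have hcard : (((d - 1 + 1 - 2 : ℕ)) : ℝ) = (d : ℝ) - 2 := by
    have : d - 1 + 1 - 2 = d - 2 := by omega
    rw [this]
    push_cast [Nat.cast_sub hd]
    ring
  rw [hcard]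
  have h1 : (1 : ℝ) / ((d : ℝ) - (1 : ℕ)) = 1 / ((d : ℝ) - 1) := by norm_num
  rw [h1]
  field_simp
  ring

theorem gram_matrix_eq (d : ℕ) (hd : 2 ≤ d) :
    (indMat d)ᵀ * wMat d * indMat d =
      (((d : ℝ) - 1) / d) • (1 : Matrix (Fin d) (Fin d) ℝ) +
        ((((d : ℝ) - 1) / d * ∑ k ∈ Finset.Icc 1 (d - 1), (1 : ℝ) / ((d : ℝ) - (k : ℝ))) -
            ((d : ℝ) - 1) / d) • (Matrix.of fun _ _ => (1 : ℝ)) := by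
  classical
  ext i j
  have lhs_eq : ((indMat d)ᵀ * wMat d * indMat d) i j
      = ∑ S ∈ Finset.univ.filter (fun S : Finset (Fin d) => S.Nonempty ∧ S ≠ Finset.univ),
          ((if i ∈ S then (1:ℝ) else 0) * shapKernel d S * (if j ∈ S then (1:ℝ) else 0)) := by
    rw [Matrix.mul_apply]
    simp only [wMat, Matrix.mul_diagonal, Matrix.transpose_apply, indMat]
    exact (Finset.sum_subtype (p := fun S : Finset (Fin d) => S.Nonempty ∧ S ≠ Finset.univ)
      (Finset.univ.filter (fun S : Finset (Fin d) => S.Nonempty ∧ S ≠ Finset.univ))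
      (fun x => by simp)
      (fun S : Finset (Fin d) =>
        (if i ∈ S then (1:ℝ) else 0) * shapKernel d S * (if j ∈ S then (1:ℝ) else 0))).symm
  rw [lhs_eq]
  by_cases hij : i = j
  · subst hij
    have conv1 : ∀ S : Finset (Fin d),
        (if i ∈ S then (1:ℝ) else 0) * shapKernel d S * (if i ∈ S then (1:ℝ) else 0)
        = (if ({i} : Finset (Fin d)) ⊆ S then shapKernel d S else 0) := by
      intro S
      by_cases h : i ∈ S <;> simp [h, Finset.singleton_subset_iff]
    simp only [conv1]
    rw [sum_main d hd {i} (Finset.singleton_nonempty i), Finset.card_singleton, sum_diag d hd]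
    simp [Matrix.add_apply, Matrix.smul_apply, Matrix.one_apply_eq, Matrix.of_apply, smul_eq_mul]
  · have conv1 : ∀ S : Finset (Fin d),
        (if i ∈ S then (1:ℝ) else 0) * shapKernel d S * (if j ∈ S then (1:ℝ) else 0)
        = (if ({i, j} : Finset (Fin d)) ⊆ S then shapKernel d S else 0) := by
      intro S
      by_cases h1 : i ∈ S <;> by_cases h2 : j ∈ S <;>
        simp [h1, h2, Finset.insert_subset_iff, Finset.singleton_subset_iff]
    simp only [conv1]
    rw [sum_main d hd {i, j} ⟨i, by simp⟩, Finset.card_pair hij, sum_off d hd]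
    simp [Matrix.add_apply, Matrix.smul_apply, Matrix.one_apply_ne hij, Matrix.of_apply,
      smul_eq_mul]
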